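/- Let x₁, …, x_M be M i.i.d. random points sampled from the uniform (equi-)distribution in the unit ball 𝔹ₙ ⊂ ℝⁿ, let 0 < r, ϑ < 1, and set ρ = √(1 − r²). If M < (r/ρ)ⁿ ( −1 + √(1 + 2ϑ ρⁿ / r^{2n}) ), then P( (xᵢ, xⱼ) < r ‖xᵢ‖ for all i, j = 1, …, M with i ≠ j ) ≥ 1 − ϑ; in particular, under this bound on M, the set {x₁, …, x_M} is Fisher-separable with probability greater than 1 − ϑ. -/

import Mathlib

open MeasureTheory ProbabilityTheory RealInnerProductSpace
open scoped ENNReal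

section AuxStochSep

open Metric

variable {n : ℕ}

private lemma quad_bound' (n M : ℕ) (r ϑ ρ : ℝ) (hr : 0 < r) (hr1 : r < 1) (hϑ : 0 < ϑ)
    (hM : 0 < M)
    (hρ : ρ = Real.sqrt (1 - r ^ 2))
    (hMbound : (M : ℝ) <
      (r / ρ) ^ n * (-1 + Real.sqrt (1 + 2 * ϑ * ρ ^ n / r ^ (2 * n)))) :
    ρ ^ n * M ^ 2 / 2 + r ^ n * M < ϑ := by
  have hρ0 : 0 < ρ := by
    rw [hρ]; exact Real.sqrt_pos.2 (by nlinarith)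
  set s := ρ ^ n with hs
  set b := r ^ n with hb
  have hs0 : 0 < s := pow_pos hρ0 n
  have hb0 : 0 < b := pow_pos hr n
  have h2n : r ^ (2 * n) = b ^ 2 := by
    rw [hb, ← pow_mul, mul_comm]
  have harg : 1 + 2 * ϑ * s / r ^ (2 * n) = (b ^ 2 + 2 * ϑ * s) / b ^ 2 := by
    rw [h2n]; field_simp
  have hsqrt : Real.sqrt (1 + 2 * ϑ * s / r ^ (2 * n))
      = Real.sqrt (b ^ 2 + 2 * ϑ * s) / b := by
    rw [harg, Real.sqrt_div (by nlinarith), Real.sqrt_sq hb0.le]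
  have hdp : (r / ρ) ^ n = b / s := by rw [div_pow]
  rw [hdp, hsqrt] at hMbound
  have key : s * M + b < Real.sqrt (b ^ 2 + 2 * ϑ * s) := by
    have h1 : (M : ℝ) * s < b / s * (-1 + Real.sqrt (b ^ 2 + 2 * ϑ * s) / b) * s :=
      mul_lt_mul_of_pos_right hMbound hs0
    have h2 : b / s * (-1 + Real.sqrt (b ^ 2 + 2 * ϑ * s) / b) * s
        = -b + Real.sqrt (b ^ 2 + 2 * ϑ * s) := by
      field_simp
    nlinarith [h1, h2]
  have hsq : (s * M + b) ^ 2 < b ^ 2 + 2 * ϑ * s := by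
    have h0 : (0:ℝ) ≤ s * M + b := by positivity
    exact (Real.lt_sqrt h0).1 key
  have hM1 : (1:ℝ) ≤ (M:ℝ) := by exact_mod_cast hM
  nlinarith [hsq, hs0, hb0, hM1]

private lemma hyperplane_null' (hn : 0 < n) (u : EuclideanSpace ℝ (Fin n)) (hu : ‖u‖ = 1)
    (r : ℝ) :
    volume {y : EuclideanSpace ℝ (Fin n) | ⟪u, y⟫ = r} = 0 := by
  have huu : ⟪u, u⟫ = 1 := by
    rw [real_inner_self_eq_norm_sq, hu]; norm_num
  set f : (EuclideanSpace ℝ (Fin n)) →L[ℝ] ℝ := innerSL ℝ u with hf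
  set S : AffineSubspace ℝ (EuclideanSpace ℝ (Fin n)) :=
    AffineSubspace.mk' (r • u) (LinearMap.ker (f : (EuclideanSpace ℝ (Fin n)) →ₗ[ℝ] ℝ)) with hS
  have hset : {y : (EuclideanSpace ℝ (Fin n)) | ⟪u, y⟫ = r}
      = (S : Set (EuclideanSpace ℝ (Fin n))) := by
    ext y
    simp only [Set.mem_setOf_eq, hS, AffineSubspace.mem_coe,
      AffineSubspace.mem_mk', vsub_eq_sub, LinearMap.mem_ker]
    have : (f : (EuclideanSpace ℝ (Fin n)) →ₗ[ℝ] ℝ) (y - r • u) = ⟪u, y⟫ - r := by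
      simp only [hf, ContinuousLinearMap.coe_coe, innerSL_apply_apply, inner_sub_right,
        real_inner_smul_right, huu]
      ring
    rw [this]
    constructor <;> intro h <;> linarith
  have hStop : S ≠ ⊤ := by
    intro h
    have hy : ((r + 1) • u) ∈ S := by rw [h]; trivial
    rw [hS, AffineSubspace.mem_mk', vsub_eq_sub, LinearMap.mem_ker] at hy
    have heq : ((r + 1) : ℝ) • u - r • u = u := by
      rw [← sub_smul]; norm_num
    rw [heq] at hy
    have : (f : (EuclideanSpace ℝ (Fin n)) →ₗ[ℝ] ℝ) u = 1 := by
      simp only [hf, ContinuousLinearMap.coe_coe, innerSL_apply_apply, huu]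
    rw [this] at hy
    exact one_ne_zero hy
  rw [hset]
  exact Measure.addHaar_affineSubspace volume S hStop

private lemma cap_bound' (hn : 0 < n) (r ρ : ℝ) (hr : 0 < r) (hr1 : r < 1)
    (hρ : ρ = Real.sqrt (1 - r ^ 2))
    (u : EuclideanSpace ℝ (Fin n)) (hu : ‖u‖ = 1) :
    volume {y : (EuclideanSpace ℝ (Fin n)) | y ∈ closedBall 0 1 ∧ r ≤ ⟪u, y⟫} ≤
      ENNReal.ofReal (ρ ^ n) * volume (closedBall (0 : (EuclideanSpace ℝ (Fin n))) 1) / 2 := by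
  haveI : Nonempty (Fin n) := ⟨⟨0, hn⟩⟩
  have hρ0 : 0 ≤ ρ := hρ ▸ Real.sqrt_nonneg _
  have hρ2 : ρ ^ 2 = 1 - r ^ 2 := by rw [hρ, Real.sq_sqrt (by nlinarith)]
  have huu : ⟪u, u⟫ = 1 := by rw [real_inner_self_eq_norm_sq, hu]; norm_num
  set c0 : (EuclideanSpace ℝ (Fin n)) := r • u with hc0
  set T : Set (EuclideanSpace ℝ (Fin n)) := closedBall c0 ρ with hT
  have hinnc0 : ∀ y : (EuclideanSpace ℝ (Fin n)), ⟪y, c0⟫ = r * ⟪u, y⟫ := by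
    intro y; rw [hc0, real_inner_smul_right, real_inner_comm]
  have hmeasge : MeasurableSet {y : (EuclideanSpace ℝ (Fin n)) | r ≤ ⟪u, y⟫} := by
    apply measurableSet_le measurable_const
    exact (continuous_const.inner continuous_id).measurable
  have hsub : {y : (EuclideanSpace ℝ (Fin n)) | y ∈ closedBall 0 1 ∧ r ≤ ⟪u, y⟫}
      ⊆ T ∩ {y : (EuclideanSpace ℝ (Fin n)) | r ≤ ⟪u, y⟫} := by
    rintro y ⟨hy1, hy2⟩
    refine ⟨?_, hy2⟩
    rw [hT, mem_closedBall, dist_eq_norm]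
    have hny : ‖y‖ ≤ 1 := by simpa [mem_closedBall, dist_eq_norm] using hy1
    have hnc0 : ‖c0‖ = r := by
      rw [hc0, norm_smul, hu, Real.norm_eq_abs, abs_of_pos hr, mul_one]
    have hsq : ‖y - c0‖ ^ 2 ≤ ρ ^ 2 := by
      rw [norm_sub_sq_real, hinnc0 y, hnc0, hρ2]
      nlinarith [norm_nonneg y]
    calc ‖y - c0‖ = Real.sqrt (‖y - c0‖ ^ 2) := (Real.sqrt_sq (norm_nonneg _)).symm
      _ ≤ Real.sqrt (ρ ^ 2) := Real.sqrt_le_sqrt hsq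
      _ = ρ := Real.sqrt_sq hρ0
  refine le_trans (measure_mono hsub) ?_
  set c : (EuclideanSpace ℝ (Fin n)) := c0 + c0 with hc
  have hinnc : ⟪u, c⟫ = 2 * r := by
    rw [hc, inner_add_right, real_inner_smul_right, huu]; ring
  have hrefl : (fun y : (EuclideanSpace ℝ (Fin n)) => c - y) ⁻¹'
        (T ∩ {y : (EuclideanSpace ℝ (Fin n)) | r < ⟪u, y⟫})
      = T ∩ {y : (EuclideanSpace ℝ (Fin n)) | ⟪u, y⟫ < r} := by
    ext y
    simp only [Set.mem_preimage, Set.mem_inter_iff, Set.mem_setOf_eq, hT, mem_closedBall]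
    constructor
    · rintro ⟨h1, h2⟩
      rw [inner_sub_right, hinnc] at h2
      constructor
      · rw [dist_eq_norm] at h1 ⊢
        have : c - y - c0 = c0 - y := by rw [hc]; abel
        rw [this] at h1
        rwa [← norm_neg, neg_sub]
      · linarith
    · rintro ⟨h1, h2⟩
      constructor
      · rw [dist_eq_norm] at h1 ⊢
        have : c - y - c0 = c0 - y := by rw [hc]; abel
        rw [this, ← norm_neg, neg_sub]
        exact h1
      · rw [inner_sub_right, hinnc]; linarith
  have hreflvol : volume (T ∩ {y : (EuclideanSpace ℝ (Fin n)) | r < ⟪u, y⟫})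
      = volume (T ∩ {y : (EuclideanSpace ℝ (Fin n)) | ⟪u, y⟫ < r}) := by
    rw [← hrefl]
    have : (fun y : (EuclideanSpace ℝ (Fin n)) => c - y)
        = (fun y : (EuclideanSpace ℝ (Fin n)) => c + y)
          ∘ (fun y : (EuclideanSpace ℝ (Fin n)) => -y) := by
      funext y; simp [sub_eq_add_neg]
    rw [this, Set.preimage_comp]
    rw [Measure.measure_preimage_neg]
    rw [measure_preimage_add]
  have hplane : volume (T ∩ {y : (EuclideanSpace ℝ (Fin n)) | ⟪u, y⟫ = r}) = 0 :=
    measure_mono_null Set.inter_subset_right (hyperplane_null' hn u hu r)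
  have hTsplit : volume T = volume (T ∩ {y : (EuclideanSpace ℝ (Fin n)) | ⟪u, y⟫ < r})
      + volume (T ∩ {y : (EuclideanSpace ℝ (Fin n)) | r ≤ ⟪u, y⟫}) := by
    rw [← measure_union ?_ (measurableSet_closedBall.inter hmeasge)]
    · congr 1
      ext y
      simp only [Set.mem_union, Set.mem_inter_iff, Set.mem_setOf_eq]
      constructor
      · intro h; rcases lt_or_ge (⟪u, y⟫) r with h2 | h2
        · exact Or.inl ⟨h, h2⟩
        · exact Or.inr ⟨h, h2⟩
      · rintro (⟨h, _⟩ | ⟨h, _⟩) <;> exact h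
    · refine Set.disjoint_left.2 ?_
      intro y hy1 hy2
      simp only [Set.mem_inter_iff, Set.mem_setOf_eq] at hy1 hy2
      exact absurd hy2.2 (not_le.2 hy1.2)
  have hgesplit : volume (T ∩ {y : (EuclideanSpace ℝ (Fin n)) | r ≤ ⟪u, y⟫})
      = volume (T ∩ {y : (EuclideanSpace ℝ (Fin n)) | r < ⟪u, y⟫}) := by
    have : T ∩ {y : (EuclideanSpace ℝ (Fin n)) | r ≤ ⟪u, y⟫}
        = (T ∩ {y : (EuclideanSpace ℝ (Fin n)) | r < ⟪u, y⟫})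
          ∪ (T ∩ {y : (EuclideanSpace ℝ (Fin n)) | ⟪u, y⟫ = r}) := by
      ext y
      simp only [Set.mem_union, Set.mem_inter_iff, Set.mem_setOf_eq]
      constructor
      · rintro ⟨h1, h2⟩
        rcases lt_or_eq_of_le h2 with h3 | h3
        · exact Or.inl ⟨h1, h3⟩
        · exact Or.inr ⟨h1, h3.symm⟩
      · rintro (⟨h1, h2⟩ | ⟨h1, h2⟩)
        · exact ⟨h1, h2.le⟩
        · exact ⟨h1, h2.ge⟩
    rw [this]
    refine le_antisymm (le_trans (measure_union_le _ _) ?_) (measure_mono Set.subset_union_left)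
    rw [hplane, add_zero]
  have h2 : 2 * volume (T ∩ {y : (EuclideanSpace ℝ (Fin n)) | r ≤ ⟪u, y⟫}) ≤ volume T := by
    rw [hTsplit, hgesplit, hreflvol, two_mul]
  have hTvol : volume T = ENNReal.ofReal (ρ ^ n)
      * volume (closedBall (0 : (EuclideanSpace ℝ (Fin n))) 1) := by
    rw [hT, Measure.addHaar_closedBall volume c0 hρ0, finrank_euclideanSpace_fin,
      Measure.addHaar_closedBall_eq_addHaar_ball]
  rw [ENNReal.le_div_iff_mul_le (Or.inl two_ne_zero) (Or.inl ENNReal.ofNat_ne_top), mul_comm]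
  rw [← hTvol]
  exact h2

private lemma mu_cap' (hn : 0 < n) (r ρ : ℝ) (hr : 0 < r) (hr1 : r < 1)
    (hρ : ρ = Real.sqrt (1 - r ^ 2))
    (x : EuclideanSpace ℝ (Fin n)) (hx : x ≠ 0) :
    ((volume (closedBall (0 : EuclideanSpace ℝ (Fin n)) 1))⁻¹ •
        volume.restrict (closedBall (0 : EuclideanSpace ℝ (Fin n)) 1))
      {y : EuclideanSpace ℝ (Fin n) | r * ‖x‖ ≤ ⟪x, y⟫} ≤ ENNReal.ofReal (ρ ^ n) / 2 := by
  set B := closedBall (0 : EuclideanSpace ℝ (Fin n)) 1 with hB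
  have hB0 : volume B ≠ 0 := (measure_closedBall_pos volume 0 one_pos).ne'
  have hBt : volume B ≠ ⊤ := (isCompact_closedBall _ _).measure_lt_top.ne
  set u : EuclideanSpace ℝ (Fin n) := ‖x‖⁻¹ • x with hu'
  have hnx : 0 < ‖x‖ := norm_pos_iff.2 hx
  have hu : ‖u‖ = 1 := norm_smul_inv_norm hx
  have hseteq : {y : EuclideanSpace ℝ (Fin n) | r * ‖x‖ ≤ ⟪x, y⟫}
      = {y : EuclideanSpace ℝ (Fin n) | r ≤ ⟪u, y⟫} := by
    ext y
    simp only [Set.mem_setOf_eq, hu', real_inner_smul_left]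
    rw [← div_eq_inv_mul, le_div_iff₀ hnx]
  rw [hseteq]
  have hmeas : MeasurableSet {y : EuclideanSpace ℝ (Fin n) | r ≤ ⟪u, y⟫} :=
    measurableSet_le measurable_const (continuous_const.inner continuous_id).measurable
  rw [Measure.smul_apply, Measure.restrict_apply hmeas, smul_eq_mul]
  have hinter : {y : EuclideanSpace ℝ (Fin n) | r ≤ ⟪u, y⟫} ∩ B
      = {y : EuclideanSpace ℝ (Fin n) | y ∈ closedBall 0 1 ∧ r ≤ ⟪u, y⟫} := by
    ext y; simp only [Set.mem_inter_iff, Set.mem_setOf_eq, hB]; tauto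
  rw [hinter]
  calc (volume B)⁻¹ * volume {y : EuclideanSpace ℝ (Fin n) | y ∈ closedBall 0 1 ∧ r ≤ ⟪u, y⟫}
      ≤ (volume B)⁻¹ * (ENNReal.ofReal (ρ ^ n) * volume B / 2) :=
        mul_le_mul_right (cap_bound' hn r ρ hr hr1 hρ u hu) _
    _ = (ENNReal.ofReal (ρ ^ n) / 2) * ((volume B)⁻¹ * volume B) := by
        rw [ENNReal.div_eq_inv_mul, ENNReal.div_eq_inv_mul]; ring
    _ = ENNReal.ofReal (ρ ^ n) / 2 := by
        rw [ENNReal.inv_mul_cancel hB0 hBt, mul_one]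

private lemma mu_small_ball' (hn : 0 < n) (r : ℝ) (hr : 0 < r) (hr1 : r < 1) :
    ((volume (closedBall (0 : EuclideanSpace ℝ (Fin n)) 1))⁻¹ •
        volume.restrict (closedBall (0 : EuclideanSpace ℝ (Fin n)) 1))
      (closedBall (0 : EuclideanSpace ℝ (Fin n)) r) = ENNReal.ofReal (r ^ n) := by
  haveI : Nonempty (Fin n) := ⟨⟨0, hn⟩⟩
  set B := closedBall (0 : EuclideanSpace ℝ (Fin n)) 1 with hB
  have hB0 : volume B ≠ 0 := (measure_closedBall_pos volume 0 one_pos).ne'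
  have hBt : volume B ≠ ⊤ := (isCompact_closedBall _ _).measure_lt_top.ne
  rw [Measure.smul_apply, Measure.restrict_apply measurableSet_closedBall, smul_eq_mul]
  have hss : closedBall (0 : EuclideanSpace ℝ (Fin n)) r ∩ B
      = closedBall (0 : EuclideanSpace ℝ (Fin n)) r :=
    Set.inter_eq_self_of_subset_left (closedBall_subset_closedBall hr1.le)
  rw [hss, Measure.addHaar_closedBall volume 0 hr.le, finrank_euclideanSpace_fin,
    Measure.addHaar_closedBall_eq_addHaar_ball]
  have hb0 : volume (ball (0 : EuclideanSpace ℝ (Fin n)) 1) ≠ 0 :=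
    (measure_ball_pos volume 0 one_pos).ne'
  have hbt : volume (ball (0 : EuclideanSpace ℝ (Fin n)) 1) ≠ ⊤ :=
    ((measure_mono ball_subset_closedBall).trans_lt
      (isCompact_closedBall (0 : EuclideanSpace ℝ (Fin n)) 1).measure_lt_top).ne
  rw [← mul_assoc, mul_comm ((volume (ball (0 : EuclideanSpace ℝ (Fin n)) 1))⁻¹), mul_assoc,
    ENNReal.inv_mul_cancel hb0 hbt, mul_one]

end AuxStochSep

/-- Corollary 1, second part: if `M < (r/ρ)ⁿ(-1 + √(1 + 2ϑρⁿ/r^{2n}))`, then with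
probability `≥ 1 - ϑ` all pairwise inequalities `⟪xᵢ, xⱼ⟫ < r ‖xᵢ‖` (`i ≠ j`) hold for `M`
i.i.d. points uniform in the unit ball; in particular the set `{x₁, …, x_M}` is
Fisher-separable (for some threshold `α ∈ (0,1)`) with probability `> 1 - ϑ`. -/
theorem stochastic_separation_pairwise_and_fisher
    (n M : ℕ) (hn : 0 < n) (hM : 0 < M)
    (r ϑ ρ : ℝ) (hr : 0 < r) (hr1 : r < 1) (hϑ : 0 < ϑ) (hϑ1 : ϑ < 1)
    (hρ : ρ = Real.sqrt (1 - r ^ 2))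
    (hMbound : (M : ℝ) <
      (r / ρ) ^ n * (-1 + Real.sqrt (1 + 2 * ϑ * ρ ^ n / r ^ (2 * n))))
    (Ω : Type*) [MeasurableSpace Ω] (P : Measure Ω) [IsProbabilityMeasure P]
    (X : Fin M → Ω → EuclideanSpace ℝ (Fin n))
    (hmeas : ∀ i, Measurable (X i))
    (hindep : iIndepFun X P)
    (hdist : ∀ i, Measure.map (X i) P =
      (volume (Metric.closedBall (0 : EuclideanSpace ℝ (Fin n)) 1))⁻¹ •
        volume.restrict (Metric.closedBall (0 : EuclideanSpace ℝ (Fin n)) 1)) :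
    (P {ω | ∀ i j : Fin M, i ≠ j → ⟪X i ω, X j ω⟫ < r * ‖X i ω‖}).toReal ≥ 1 - ϑ ∧
    (P {ω | ∃ α : ℝ, 0 < α ∧ α < 1 ∧
        ∀ i j : Fin M, i ≠ j →
          ⟪X i ω, X j ω⟫ ≤ α * ⟪X i ω, X i ω⟫}).toReal > 1 - ϑ := by
  classical
  haveI : Nonempty (Fin n) := ⟨⟨0, hn⟩⟩
  haveI : Nonempty (Fin M) := ⟨⟨0, hM⟩⟩
  haveI : Nontrivial (EuclideanSpace ℝ (Fin n)) := by
    refine ⟨0, EuclideanSpace.single ⟨0, hn⟩ 1, fun h => ?_⟩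
    have := congrArg (fun v => v ⟨0, hn⟩) h
    simp [EuclideanSpace.single_apply] at this
  set μ : Measure (EuclideanSpace ℝ (Fin n)) :=
    (volume (Metric.closedBall (0 : EuclideanSpace ℝ (Fin n)) 1))⁻¹ •
      volume.restrict (Metric.closedBall (0 : EuclideanSpace ℝ (Fin n)) 1) with hμ
  haveI hμprob : IsProbabilityMeasure μ := by
    rw [← hdist ⟨0, hM⟩]
    exact Measure.isProbabilityMeasure_map (hmeas _).aemeasurable
  have hρpos : 0 < ρ := by rw [hρ]; exact Real.sqrt_pos.2 (by nlinarith)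
  -- pairwise bound
  have hpair : ∀ i j : Fin M, i ≠ j →
      P {ω | r * ‖X i ω‖ ≤ ⟪X i ω, X j ω⟫} ≤ ENNReal.ofReal (ρ ^ n) / 2 := by
    intro i j hij
    set A : Set (EuclideanSpace ℝ (Fin n) × EuclideanSpace ℝ (Fin n)) :=
      {p | r * ‖p.1‖ ≤ ⟪p.1, p.2⟫} with hA
    have hAm : MeasurableSet A := by
      apply measurableSet_le
      · exact (continuous_const.mul continuous_fst.norm).measurable
      · exact (continuous_fst.inner continuous_snd).measurable
    have hpre : {ω | r * ‖X i ω‖ ≤ ⟪X i ω, X j ω⟫} = (fun ω => (X i ω, X j ω)) ⁻¹' A := rfl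
    have hmp : Measurable fun ω => (X i ω, X j ω) := (hmeas i).prodMk (hmeas j)
    rw [hpre, ← Measure.map_apply hmp hAm]
    have hmap : P.map (fun ω => (X i ω, X j ω)) = μ.prod μ := by
      rw [(indepFun_iff_map_prod_eq_prod_map_map (hmeas i).aemeasurable
        (hmeas j).aemeasurable).1 (hindep.indepFun hij), hdist i, hdist j]
    rw [hmap, Measure.prod_apply hAm]
    have hae : ∀ᵐ x ∂μ, μ (Prod.mk x ⁻¹' A) ≤ ENNReal.ofReal (ρ ^ n) / 2 := by
      have h0 : μ {(0 : EuclideanSpace ℝ (Fin n))} = 0 := by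
        rw [hμ, Measure.smul_apply, Measure.restrict_apply (measurableSet_singleton _),
          smul_eq_mul]
        have : volume ({(0 : EuclideanSpace ℝ (Fin n))}
            ∩ Metric.closedBall (0 : EuclideanSpace ℝ (Fin n)) 1) = 0 :=
          measure_mono_null Set.inter_subset_left (measure_singleton _)
        rw [this, mul_zero]
      have hne : ∀ᵐ x ∂μ, x ≠ (0 : EuclideanSpace ℝ (Fin n)) := by
        rw [ae_iff]
        convert h0 using 2
        ext x; simp
      filter_upwards [hne] with x hx
      have hpre2 : Prod.mk x ⁻¹' A = {y : EuclideanSpace ℝ (Fin n) | r * ‖x‖ ≤ ⟪x, y⟫} := rfl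
      rw [hpre2, hμ]
      exact mu_cap' hn r ρ hr hr1 hρ x hx
    calc ∫⁻ x, μ (Prod.mk x ⁻¹' A) ∂μ
        ≤ ∫⁻ _, ENNReal.ofReal (ρ ^ n) / 2 ∂μ := lintegral_mono_ae hae
      _ = ENNReal.ofReal (ρ ^ n) / 2 := by rw [lintegral_const, measure_univ, mul_one]
  -- norm bound
  have hnorm : ∀ i : Fin M, P {ω | ‖X i ω‖ ≤ r} = ENNReal.ofReal (r ^ n) := by
    intro i
    have hpre : {ω | ‖X i ω‖ ≤ r}
        = X i ⁻¹' (Metric.closedBall (0 : EuclideanSpace ℝ (Fin n)) r) := by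
      ext ω; simp [mem_closedBall_zero_iff]
    rw [hpre, ← Measure.map_apply (hmeas i) measurableSet_closedBall, hdist i]
    exact mu_small_ball' hn r hr hr1
  -- events
  set E : Fin M × Fin M → Set Ω :=
    fun p => {ω | r * ‖X p.1 ω‖ ≤ ⟪X p.1 ω, X p.2 ω⟫} with hE
  have hEm : ∀ p, MeasurableSet (E p) := fun p =>
    measurableSet_le ((hmeas p.1).norm.const_mul r) ((hmeas p.1).inner (hmeas p.2))
  set N : Fin M → Set Ω := fun i => {ω | ‖X i ω‖ ≤ r} with hN
  have hNm : ∀ i, MeasurableSet (N i) := fun i =>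
    measurableSet_le (hmeas i).norm measurable_const
  set Bad1 : Set Ω := ⋃ p ∈ (Finset.univ.offDiag : Finset (Fin M × Fin M)), E p with hBad1
  have hBad1m : MeasurableSet Bad1 :=
    MeasurableSet.biUnion (Finset.univ.offDiag : Finset (Fin M × Fin M)).countable_toSet
      fun p _ => hEm p
  set BadN : Set Ω := ⋃ i, N i with hBadN
  have hBadNm : MeasurableSet BadN := MeasurableSet.iUnion fun i => hNm i
  -- bounds
  have hBad1le : P Bad1 ≤ (M * M - M : ℕ) * (ENNReal.ofReal (ρ ^ n) / 2) := by
    calc P Bad1 ≤ ∑ p ∈ (Finset.univ.offDiag : Finset (Fin M × Fin M)), P (E p) :=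
          measure_biUnion_finset_le _ _
      _ ≤ (Finset.univ.offDiag : Finset (Fin M × Fin M)).card • (ENNReal.ofReal (ρ ^ n) / 2) :=
          Finset.sum_le_card_nsmul _ _ _ fun p hp =>
            hpair p.1 p.2 (Finset.mem_offDiag.1 hp).2.2
      _ = (M * M - M : ℕ) * (ENNReal.ofReal (ρ ^ n) / 2) := by
          rw [Finset.offDiag_card, Finset.card_univ, Fintype.card_fin, nsmul_eq_mul]
  have hBadNle : P BadN ≤ (M : ℕ) * ENNReal.ofReal (r ^ n) := by
    calc P BadN ≤ ∑ i : Fin M, P (N i) := measure_iUnion_fintype_le _ _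
      _ = (M : ℕ) * ENNReal.ofReal (r ^ n) := by
          simp [hN, hnorm, Finset.sum_const, Finset.card_univ, nsmul_eq_mul]
  -- numeric bounds
  have hquad := quad_bound' n M r ϑ ρ hr hr1 hϑ hM hρ hMbound
  set c1 : ℝ := ((M * M - M : ℕ) : ℝ) * (ρ ^ n / 2) with hc1
  set c2 : ℝ := (M : ℝ) * r ^ n with hc2
  have hcast : ((M * M - M : ℕ) : ℝ) = (M : ℝ) * M - M := by
    have hle : M ≤ M * M := Nat.le_mul_of_pos_left M hM
    push_cast [Nat.cast_sub hle]
    ring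
  have hc1nonneg : 0 ≤ c1 := by positivity
  have hc2nonneg : 0 ≤ c2 := by positivity
  have hsum : c1 + c2 < ϑ := by
    have hM1 : (1 : ℝ) ≤ (M : ℝ) := by exact_mod_cast hM
    have hρn : 0 < ρ ^ n := pow_pos hρpos n
    rw [hc1, hc2, hcast]
    nlinarith [hquad, hρn, hM1]
  have hofc1 : ((M * M - M : ℕ) : ℝ≥0∞) * (ENNReal.ofReal (ρ ^ n) / 2)
      = ENNReal.ofReal c1 := by
    rw [hc1, ENNReal.ofReal_mul (Nat.cast_nonneg _), ENNReal.ofReal_div_of_pos two_pos,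
      ENNReal.ofReal_natCast, ENNReal.ofReal_ofNat]
  have hofc2 : ((M : ℕ) : ℝ≥0∞) * ENNReal.ofReal (r ^ n) = ENNReal.ofReal c2 := by
    rw [hc2, ENNReal.ofReal_mul (Nat.cast_nonneg _), ENNReal.ofReal_natCast]
  have hBad1le' : P Bad1 ≤ ENNReal.ofReal c1 := hofc1 ▸ hBad1le
  have hBadle : P (Bad1 ∪ BadN) ≤ ENNReal.ofReal (c1 + c2) := by
    calc P (Bad1 ∪ BadN) ≤ P Bad1 + P BadN := measure_union_le _ _
      _ ≤ ENNReal.ofReal c1 + ENNReal.ofReal c2 :=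
          add_le_add hBad1le' (hofc2 ▸ hBadNle)
      _ = ENNReal.ofReal (c1 + c2) := (ENNReal.ofReal_add hc1nonneg hc2nonneg).symm
  -- identify good event 1 with complement of Bad1
  have hE1 : {ω | ∀ i j : Fin M, i ≠ j → ⟪X i ω, X j ω⟫ < r * ‖X i ω‖} = Bad1ᶜ := by
    ext ω
    simp only [hBad1, Set.mem_setOf_eq, Set.mem_compl_iff, Set.mem_iUnion, exists_prop,
      Finset.mem_offDiag, Finset.mem_univ, true_and, not_exists, not_le, hE]
    constructor
    · rintro h ⟨i, j⟩ ⟨hij, hle⟩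
      exact absurd hle (not_le.2 (h i j hij))
    · intro h i j hij
      exact not_le.1 fun hle => h (i, j) ⟨hij, hle⟩
  -- part 1
  have htoReal1 : (P Bad1).toReal ≤ c1 := by
    have := ENNReal.toReal_mono ENNReal.ofReal_ne_top hBad1le'
    rwa [ENNReal.toReal_ofReal hc1nonneg] at this
  have hP1 : (P {ω | ∀ i j : Fin M, i ≠ j → ⟪X i ω, X j ω⟫ < r * ‖X i ω‖}).toReal
      = 1 - (P Bad1).toReal := by
    rw [hE1, prob_compl_eq_one_sub hBad1m,
      ENNReal.toReal_sub_of_le prob_le_one ENNReal.one_ne_top, ENNReal.toReal_one]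
  have part1 : (P {ω | ∀ i j : Fin M, i ≠ j → ⟪X i ω, X j ω⟫ < r * ‖X i ω‖}).toReal ≥ 1 - ϑ := by
    rw [hP1]
    have : c1 ≤ ϑ := by linarith
    linarith [htoReal1]
  refine ⟨part1, ?_⟩
  -- part 2
  have hsub2 : (Bad1 ∪ BadN)ᶜ ⊆ {ω | ∃ α : ℝ, 0 < α ∧ α < 1 ∧
      ∀ i j : Fin M, i ≠ j → ⟪X i ω, X j ω⟫ ≤ α * ⟪X i ω, X i ω⟫} := by
    intro ω hω
    rw [Set.mem_compl_iff, Set.mem_union, not_or] at hω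
    obtain ⟨h1, h2⟩ := hω
    have hlt : ∀ i j : Fin M, i ≠ j → ⟪X i ω, X j ω⟫ < r * ‖X i ω‖ := by
      have := (Set.ext_iff.1 hE1 ω).2 h1
      exact this
    have hnr : ∀ i : Fin M, r < ‖X i ω‖ := by
      intro i
      by_contra hcon
      exact h2 (Set.mem_iUnion.2 ⟨i, not_lt.1 hcon⟩)
    set α : ℝ := Finset.univ.sup' Finset.univ_nonempty (fun i => r / ‖X i ω‖) with hα
    have hpos : ∀ i : Fin M, 0 < ‖X i ω‖ := fun i => lt_trans hr (hnr i)
    refine ⟨α, ?_, ?_, ?_⟩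
    · rw [hα]
      calc (0 : ℝ) < r / ‖X ⟨0, hM⟩ ω‖ := div_pos hr (hpos _)
        _ ≤ _ := Finset.le_sup' (fun i : Fin M => r / ‖X i ω‖) (Finset.mem_univ _)
    · rw [hα]
      exact (Finset.sup'_lt_iff Finset.univ_nonempty).2 fun i _ =>
        (div_lt_one (hpos i)).2 (hnr i)
    · intro i j hij
      have hne : ‖X i ω‖ ≠ 0 := (hpos i).ne'
      have h1' : ⟪X i ω, X j ω⟫ < r * ‖X i ω‖ := hlt i j hij
      have h2' : (r / ‖X i ω‖) * ‖X i ω‖ ^ 2 = r * ‖X i ω‖ := by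
        field_simp
      have h3' : (r / ‖X i ω‖) * ‖X i ω‖ ^ 2 ≤ α * ‖X i ω‖ ^ 2 :=
        mul_le_mul_of_nonneg_right
          (Finset.le_sup' (fun i : Fin M => r / ‖X i ω‖) (Finset.mem_univ i)) (sq_nonneg _)
      rw [real_inner_self_eq_norm_sq]
      rw [← h2'] at h1'
      linarith
  have htoReal2 : (P (Bad1 ∪ BadN)).toReal ≤ c1 + c2 := by
    have := ENNReal.toReal_mono ENNReal.ofReal_ne_top hBadle
    rwa [ENNReal.toReal_ofReal (by linarith)] at this
  have hcompl : (P ((Bad1 ∪ BadN)ᶜ)).toReal = 1 - (P (Bad1 ∪ BadN)).toReal := by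
    rw [prob_compl_eq_one_sub (hBad1m.union hBadNm),
      ENNReal.toReal_sub_of_le prob_le_one ENNReal.one_ne_top, ENNReal.toReal_one]
  have hmono : (P ((Bad1 ∪ BadN)ᶜ)).toReal
      ≤ (P {ω | ∃ α : ℝ, 0 < α ∧ α < 1 ∧ ∀ i j : Fin M, i ≠ j →
          ⟪X i ω, X j ω⟫ ≤ α * ⟪X i ω, X i ω⟫}).toReal :=
    ENNReal.toReal_mono (measure_ne_top P _) (measure_mono hsub2)
  calc (1 : ℝ) - ϑ < 1 - (c1 + c2) := by linarith
    _ ≤ 1 - (P (Bad1 ∪ BadN)).toReal := by linarith [htoReal2]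
    _ = (P ((Bad1 ∪ BadN)ᶜ)).toReal := hcompl.symm
    _ ≤ _ := hmono
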